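/- Let D be a commutative ring and χ a group homomorphism from SL(2,D) to the multiplicative group of nonzero complex numbers. Then for every unit u of D and every b in D, χ(T(b·(u²−1))) = 1; in other words, the ideal of D generated by all u²−1 with u a unit of D is contained in the annihilator ideal {a ∈ D : χ(T(ab)) = 1 for all b ∈ D} of χ. -/

import Mathlib

/-- The elementary matrix `T a = [[1,a],[0,1]]` as an element of `SL(2,D)`. -/
def Tmat {D : Type*} [CommRing D] (a : D) : Matrix.SpecialLinearGroup (Fin 2) D :=
  ⟨!![1, a; 0, 1], by simp [Matrix.det_fin_two_of]⟩

lemma Tmat_add {D : Type*} [CommRing D] (a b : D) :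
    Tmat (a + b) = Tmat a * Tmat b := by
  apply Subtype.ext
  erw [Matrix.SpecialLinearGroup.coe_mul]
  simp [Tmat, Matrix.mul_fin_two, add_comm]

/-- The diagonal matrix `diag(u, u⁻¹)` in `SL(2,D)`. -/
def Dmat {D : Type*} [CommRing D] (u : Dˣ) : Matrix.SpecialLinearGroup (Fin 2) D :=
  ⟨!![(u : D), 0; 0, ((u⁻¹ : Dˣ) : D)], by simp [Matrix.det_fin_two_of]⟩

lemma Dmat_mul_Tmat {D : Type*} [CommRing D] (u : Dˣ) (a : D) :
    Dmat u * Tmat a = Tmat ((u : D) ^ 2 * a) * Dmat u := by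
  apply Subtype.ext
  have hu : (u : D) * ((u⁻¹ : Dˣ) : D) = 1 := u.mul_inv
  have key : (u : D) ^ 2 * a * ((u⁻¹ : Dˣ) : D) = (u : D) * a := by
    have h : (u : D) ^ 2 * a * ((u⁻¹ : Dˣ) : D)
        = (u : D) * a * ((u : D) * ((u⁻¹ : Dˣ) : D)) := by ring
    rw [h, hu, mul_one]
  erw [Matrix.SpecialLinearGroup.coe_mul, Matrix.SpecialLinearGroup.coe_mul]
  simp [Dmat, Tmat, Matrix.mul_fin_two, key]

lemma chi_Tmat_sq {D : Type*} [CommRing D]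
    (χ : Matrix.SpecialLinearGroup (Fin 2) D →* ℂˣ) (u : Dˣ) (a : D) :
    χ (Tmat ((u : D) ^ 2 * a)) = χ (Tmat a) := by
  have h := congrArg χ (Dmat_mul_Tmat u a)
  simp only [map_mul] at h
  have := h.symm
  rw [mul_comm (χ (Dmat u))] at this
  exact mul_right_cancel this

theorem units_sq_sub_one_in_annihilator {D : Type*} [CommRing D]
    (χ : Matrix.SpecialLinearGroup (Fin 2) D →* ℂˣ) :
    (∀ (u : Dˣ) (b : D), χ (Tmat (b * ((u : D) ^ 2 - 1))) = 1) ∧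
    (∀ a ∈ Ideal.span {x : D | ∃ u : Dˣ, x = (u : D) ^ 2 - 1},
      ∀ b : D, χ (Tmat (a * b)) = 1) := by
  have key : ∀ (u : Dˣ) (b : D), χ (Tmat (b * ((u : D) ^ 2 - 1))) = 1 := by
    intro u b
    have h1 : b * ((u : D) ^ 2 - 1) + b = (u : D) ^ 2 * b := by ring
    have h2 := congrArg χ (congrArg Tmat h1)
    rw [Tmat_add, map_mul, chi_Tmat_sq] at h2
    exact mul_right_cancel (by rw [h2, one_mul])
  refine ⟨key, ?_⟩
  intro a ha b
  induction ha using Submodule.span_induction generalizing b with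
  | mem x hx =>
      obtain ⟨u, rfl⟩ := hx
      rw [mul_comm]; exact key u b
  | zero =>
      rw [zero_mul, show Tmat (0 : D) = 1 from Subtype.ext
        (by simp [Tmat, Matrix.SpecialLinearGroup.coe_one, Matrix.one_fin_two]), map_one]
  | add x y _ _ hx hy =>
      rw [add_mul, Tmat_add, map_mul, hx, hy, one_mul]
  | smul c x _ hx =>
      rw [smul_eq_mul, mul_assoc, mul_left_comm]; exact hx (c * b)
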